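/- arXiv:1402.5193 — 2 statements merged into one kernel-verified Lean document; each statement's English description precedes it below -/
import Mathlib

section
/- Let c ∈ ℕ₀ and 0 ≤ j ≤ ν. Let s_0,…,s_μ ∈ R and let δ_G ∈ (π_M, ε)·I'_G, where I'_G is the ideal of O_M[[ε]] generated by π_M^{φ̃^k_{M/L}(c)} ε^{p^k} for 0 ≤ k ≤ μ. Set u = π_L/π_M^m ∈ O_M^×. Then π_L^{i_j} · ( Σ_{k=0}^{μ} s_k π_M^{φ̃^k_{M/L}(c)} ε^{p^k} + δ_G )^{p^j} ≡ u^{i_j} Σ_{k=0}^{μ} s_k^{p^j} π_M^{φ̃^{j,m}_{L/K}(φ̃^k_{M/L}(c))} ε^{p^{j+k}} modulo (π_M, ε)·I_{FG}, where I_{FG} is the ideal of O_M[[ε]] generated by π_M^{λ^g_{M/K}(c)} ε^{p^g} for 0 ≤ g ≤ ν+μ. -/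
noncomputable section

/-- The additive valuation (with respect to powers of the prime element `π`) of an
element `x` of a discrete valuation ring: the largest `k` with `x ∈ (π^k)`
(`⊤` if `x = 0`). -/
def piVal {A : Type*} [CommRing A] (π : A) (x : A) : ℕ∞ :=
  ⨆ k ∈ {k : ℕ | x ∈ Ideal.span {π ^ k}}, (k : ℕ∞)

/-- `ĩ_j = min {h ≥ 0 : v_p(h+n) ≤ j, a_h ≠ 0}` (`⊤` if no such `h` exists). -/
def itilde (p n : ℕ) {OK : Type*} [CommRing OK] (aF : ℕ → OK) (j : ℕ) : ℕ∞ :=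
  ⨅ h ∈ {h : ℕ | padicValNat p (h + n) ≤ j ∧ aF h ≠ 0}, (h : ℕ∞)

/-- The `j`-th index of inseparability (closed form):
`i_j = min {ĩ_{j₁} + (j₁−j)·v(p) : j ≤ j₁ ≤ ν}`. -/
def insepIdx (p n ν : ℕ) {OK : Type*} [CommRing OK] (aF : ℕ → OK) (vLp : ℕ∞) (j : ℕ) : ℕ∞ :=
  ⨅ j1 ∈ Set.Icc j ν, (itilde p n aF j1 + ((j1 - j : ℕ) : ℕ∞) * vLp)

/-- The generalized Hasse–Herbrand function
`φ^l(x) = min {i_{l₀} + p^{l₀} x : 0 ≤ l₀ ≤ l}` attached to indices `iL`. -/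
def hhPhi (p : ℕ) (iL : ℕ → ℕ) (l : ℕ) (x : ℝ) : ℝ :=
  sInf {y : ℝ | ∃ l0 ≤ l, y = iL l0 + (p : ℝ) ^ l0 * x}

/-- `λ^l_{M/K}(x) = min {φ̃^{j,m}_{L/K}(φ̃^k_{M/L}(x)) : (j,k) ∈ Ω_{l₀}, l₀ ≤ l}`, where
`φ̃^{j,m}_{L/K}(y) = m·i_j + p^j y` and `φ̃^k_{M/L}(x) = i'_k + p^k x`. -/
def lamMK (p m : ℕ) (iL iM : ℕ → ℕ) (ν μ l : ℕ) (x : ℝ) : ℝ :=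
  sInf {y : ℝ | ∃ j k : ℕ, j ≤ ν ∧ k ≤ μ ∧ j + k ≤ l ∧
    y = (m : ℝ) * iL j + (p : ℝ) ^ j * ((iM k : ℝ) + (p : ℝ) ^ k * x)}

/-- `S_l^a(x) = {(j,k) ∈ Ω_a : φ̃^{j,m}_{L/K}(φ̃^k_{M/L}(x)) = λ^l_{M/K}(x)}`. -/
def sSetMK (p m : ℕ) (iL iM : ℕ → ℕ) (ν μ l a : ℕ) (x : ℝ) : Set (ℕ × ℕ) :=
  {jk : ℕ × ℕ | jk.1 ≤ ν ∧ jk.2 ≤ μ ∧ jk.1 + jk.2 = a ∧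
    (m : ℝ) * iL jk.1 + (p : ℝ) ^ jk.1 * ((iM jk.2 : ℝ) + (p : ℝ) ^ jk.2 * x)
      = lamMK p m iL iM ν μ l x}

/-- `λ^g_{M/K}(c)` at a nonnegative integer `c` (a natural number):
`min {m·i_j + p^j·(i'_k + p^k c) : (j,k) ∈ Ω_{g₀}, g₀ ≤ g}`. -/
def lamNat (p m : ℕ) (iL iM : ℕ → ℕ) (ν μ g c : ℕ) : ℕ :=
  sInf {t : ℕ | ∃ j k : ℕ, j ≤ ν ∧ k ≤ μ ∧ j + k ≤ g ∧
    t = m * iL j + p ^ j * (iM k + p ^ k * c)}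

namespace Stmt13Aux

open PowerSeries Finset

open PowerSeries Finset

/-- Arithmetic predicate guaranteeing membership of `p^w πM^a X^d` in the target ideal
after multiplication by `πM^(m i_j)`. -/
def MP (p V μ c : ℕ) (iM : ℕ → ℕ) (h w a d : ℕ) : Prop :=
  ∃ q k', q ≤ h ∧ k' ≤ μ ∧
    ((q * V + p ^ (h - q) * (iM k' + p ^ k' * c) + 1 ≤ w * V + a ∧ p ^ (h - q + k') ≤ d) ∨
     (q * V + p ^ (h - q) * (iM k' + p ^ k' * c) ≤ w * V + a ∧ p ^ (h - q + k') + 1 ≤ d))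

/-- The level-`h` error ideal. -/
def EI (OM : Type) [CommRing OM] (πM : OM) (p V μ c : ℕ) (iM : ℕ → ℕ) (h : ℕ) :
    Ideal (PowerSeries OM) :=
  Ideal.span {f | ∃ w a d : ℕ, MP p V μ c iM h w a d ∧
    f = C (R := OM) ((p : OM) ^ w * πM ^ a) * X ^ d}

section Arith

variable {p V μ c : ℕ} {iM : ℕ → ℕ}

lemma MP.succ_p {h w a d : ℕ} (H : MP p V μ c iM h w a d) :
    MP p V μ c iM (h + 1) (w + 1) a d := by
  obtain ⟨q, k', hq, hk', H⟩ := H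
  refine ⟨q + 1, k', by omega, hk', ?_⟩
  have e1 : h + 1 - (q + 1) = h - q := by omega
  rw [e1]
  rcases H with ⟨H1, H2⟩ | ⟨H1, H2⟩
  · exact Or.inl ⟨by nlinarith, H2⟩
  · exact Or.inr ⟨by nlinarith, H2⟩

lemma MP.pow {h w a d : ℕ} (hp : 1 ≤ p) (H : MP p V μ c iM h w a d) :
    MP p V μ c iM (h + 1) (w * p) (a * p) (d * p) := by
  obtain ⟨q, k', hq, hk', H⟩ := H
  refine ⟨q, k', by omega, hk', ?_⟩
  have e1 : h + 1 - q = (h - q) + 1 := by omega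
  have e2 : p ^ (h + 1 - q + k') = p ^ (h - q + k') * p := by
    rw [show h + 1 - q + k' = (h - q + k') + 1 by omega, pow_succ]
  rw [e2, e1, pow_succ]
  rcases H with ⟨H1, H2⟩ | ⟨H1, H2⟩
  · refine Or.inl ⟨?_, ?_⟩
    · nlinarith [Nat.mul_le_mul_left p H1, Nat.zero_le (q * V), hp]
    · nlinarith [Nat.mul_le_mul_left p H2, hp]
  · refine Or.inr ⟨?_, ?_⟩
    · nlinarith [Nat.mul_le_mul_left p H1, Nat.zero_le (q * V), hp]
    · nlinarith [Nat.mul_le_mul_left p H2, hp]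

lemma MP.pair {h k k' : ℕ} (hp : 1 ≤ p) (hk : k ≤ μ) (hk' : k' ≤ μ) :
    MP p V μ c iM (h + 1) 1
      (p ^ h * (iM k + p ^ k * c) + p ^ h * (iM k' + p ^ k' * c))
      (p ^ h * p ^ k + p ^ h * p ^ k') := by
  have hpk : 1 ≤ p ^ h * p ^ k := Nat.one_le_iff_ne_zero.mpr (by positivity)
  have hpk' : 1 ≤ p ^ h * p ^ k' := Nat.one_le_iff_ne_zero.mpr (by positivity)
  rcases le_total k k' with hle | hle
  · refine ⟨1, k, by omega, hk, Or.inr ⟨?_, ?_⟩⟩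
    · have e1 : h + 1 - 1 = h := by omega
      rw [e1]; omega
    · have e1 : p ^ (h + 1 - 1 + k) = p ^ h * p ^ k := by
        rw [show h + 1 - 1 + k = h + k by omega, pow_add]
      omega
  · refine ⟨1, k', by omega, hk', Or.inr ⟨?_, ?_⟩⟩
    · have e1 : h + 1 - 1 = h := by omega
      rw [e1]; omega
    · have e1 : p ^ (h + 1 - 1 + k') = p ^ h * p ^ k' := by
        rw [show h + 1 - 1 + k' = h + k' by omega, pow_add]
      omega

lemma MP.base_pi {k : ℕ} (hk : k ≤ μ) :
    MP p V μ c iM 0 0 (iM k + p ^ k * c + 1) (p ^ k) :=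
  ⟨0, k, le_refl 0, hk, Or.inl ⟨by simp, by simp⟩⟩

lemma MP.base_X {k : ℕ} (hk : k ≤ μ) :
    MP p V μ c iM 0 0 (iM k + p ^ k * c) (p ^ k + 1) :=
  ⟨0, k, le_refl 0, hk, Or.inr ⟨by simp, by simp⟩⟩

end Arith

section Ring

variable {OM : Type} [CommRing OM] (πM : OM) (p V μ c : ℕ) (iM : ℕ → ℕ)

local notation "A" => PowerSeries OM

lemma gen_mem {h w a d : ℕ} (H : MP p V μ c iM h w a d) :
    C (R := OM) ((p : OM) ^ w * πM ^ a) * X ^ d ∈ EI OM πM p V μ c iM h :=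
  Ideal.subset_span ⟨w, a, d, H, rfl⟩

lemma p_mul_mem {h : ℕ} {f : A} (hf : f ∈ EI OM πM p V μ c iM h) :
    (p : A) * f ∈ EI OM πM p V μ c iM (h + 1) := by
  refine Submodule.span_induction ?_ ?_ ?_ ?_ hf
  · rintro x ⟨w, a, d, H, rfl⟩
    have e1 : (p : A) * (C (R := OM) ((p : OM) ^ w * πM ^ a) * X ^ d)
        = C (R := OM) ((p : OM) ^ (w + 1) * πM ^ a) * X ^ d := by
      rw [← map_natCast (C (R := OM)) p, ← mul_assoc, ← map_mul]
      ring_nf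
    rw [e1]
    exact gen_mem πM p V μ c iM H.succ_p
  · simp
  · intro x y _ _ hx hy
    rw [mul_add]; exact add_mem hx hy
  · intro r x _ hx
    rw [smul_eq_mul, mul_left_comm]
    exact Ideal.mul_mem_left _ _ hx

lemma add_pow_split {R : Type} [CommRing R] (x y : R) {p : ℕ} (hp : 1 ≤ p) :
    (x + y) ^ p = x ^ p + y ^ p
      + ∑ t ∈ range (p - 1), x ^ (t + 1) * y ^ (p - (t + 1)) * (p.choose (t + 1) : R) := by
  obtain ⟨p', rfl⟩ : ∃ p', p = p' + 1 := ⟨p - 1, by omega⟩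
  rw [add_pow, Finset.sum_range_succ, Finset.sum_range_succ']
  simp only [Nat.choose_self, Nat.choose_zero_right, Nat.cast_one, pow_zero, one_mul, mul_one,
    Nat.add_sub_cancel, Nat.sub_zero, Nat.add_sub_cancel_left, Nat.sub_self]
  ring

lemma pow_p_mem {p : ℕ} (hp : p.Prime) {h : ℕ} {f : A} (hf : f ∈ EI OM πM p V μ c iM h) :
    f ^ p ∈ EI OM πM p V μ c iM (h + 1) := by
  refine Submodule.span_induction ?_ ?_ ?_ ?_ hf
  · rintro x ⟨w, a, d, H, rfl⟩
    have e1 : (C (R := OM) ((p : OM) ^ w * πM ^ a) * X ^ d) ^ p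
        = C (R := OM) ((p : OM) ^ (w * p) * πM ^ (a * p)) * X ^ (d * p) := by
      rw [mul_pow, ← map_pow, ← pow_mul]
      congr 2
      rw [mul_pow, ← pow_mul, ← pow_mul]
    rw [e1]
    exact gen_mem πM p V μ c iM (H.pow hp.one_lt.le)
  · rw [zero_pow hp.ne_zero]; exact zero_mem _
  · intro x y hxm hym hx hy
    rw [add_pow_split x y hp.one_lt.le]
    refine add_mem (add_mem hx hy) (Ideal.sum_mem _ fun t ht => ?_)
    have ht1 : 0 < t + 1 := Nat.succ_pos t
    have ht2 : t + 1 < p := by have := Finset.mem_range.mp ht; omega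
    obtain ⟨cc, hcc⟩ := hp.dvd_choose_self (Nat.succ_ne_zero t) ht2
    have e2 : x ^ (t + 1) * y ^ (p - (t + 1)) * ((p.choose (t + 1) : ℕ) : A)
        = (p : A) * (x ^ t * y ^ (p - (t + 1)) * (cc : A) * x) := by
      rw [hcc]; push_cast; ring
    rw [e2]
    exact p_mul_mem πM p V μ c iM (Ideal.mul_mem_left _ _ hxm)
  · intro r x _ hx
    rw [smul_pow]
    exact Submodule.smul_mem _ _ hx

lemma pair_mem {p : ℕ} (hp : 1 ≤ p) {h k k' : ℕ} (hk : k ≤ μ) (hk' : k' ≤ μ) (b b' : OM) :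
    (p : A) * (C (R := OM) (b * πM ^ (p ^ h * (iM k + p ^ k * c))) * X ^ (p ^ h * p ^ k))
      * (C (R := OM) (b' * πM ^ (p ^ h * (iM k' + p ^ k' * c))) * X ^ (p ^ h * p ^ k'))
      ∈ EI OM πM p V μ c iM (h + 1) := by
  have e1 : (p : A) * (C (R := OM) (b * πM ^ (p ^ h * (iM k + p ^ k * c))) * X ^ (p ^ h * p ^ k))
      * (C (R := OM) (b' * πM ^ (p ^ h * (iM k' + p ^ k' * c))) * X ^ (p ^ h * p ^ k'))
      = (C (R := OM) ((p : OM) ^ 1 * πM ^ (p ^ h * (iM k + p ^ k * c) + p ^ h * (iM k' + p ^ k' * c)))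
          * X ^ (p ^ h * p ^ k + p ^ h * p ^ k')) * C (R := OM) (b * b') := by
    simp only [map_mul, map_pow, map_natCast, pow_one, pow_add]
    ring
  rw [e1]
  exact Ideal.mul_mem_right _ _ (gen_mem πM p V μ c iM (MP.pair hp hk hk'))

lemma main_pow_sum {p : ℕ} (hp : p.Prime) (b : ℕ → OM) (h : ℕ) (s : Finset ℕ)
    (hs : ∀ k ∈ s, k ≤ μ) :
    (∑ k ∈ s, C (R := OM) (b k * πM ^ (p ^ h * (iM k + p ^ k * c))) * X ^ (p ^ h * p ^ k)) ^ p
      - ∑ k ∈ s, (C (R := OM) (b k * πM ^ (p ^ h * (iM k + p ^ k * c))) * X ^ (p ^ h * p ^ k)) ^ p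
      ∈ EI OM πM p V μ c iM (h + 1) := by
  classical
  revert hs
  refine Finset.induction_on s ?_ ?_
  · intro _; simp [zero_pow hp.ne_zero]
  · intro a s ha ih hs
    have hs' : ∀ k ∈ s, k ≤ μ := fun k hk => hs k (Finset.mem_insert_of_mem hk)
    have ha' : a ≤ μ := hs a (Finset.mem_insert_self a s)
    rw [Finset.sum_insert ha, Finset.sum_insert ha]
    set ya := C (R := OM) (b a * πM ^ (p ^ h * (iM a + p ^ a * c))) * X ^ (p ^ h * p ^ a) with hya
    set W := ∑ k ∈ s, C (R := OM) (b k * πM ^ (p ^ h * (iM k + p ^ k * c))) * X ^ (p ^ h * p ^ k)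
      with hW
    set S4 := ∑ k ∈ s, (C (R := OM) (b k * πM ^ (p ^ h * (iM k + p ^ k * c))) * X ^ (p ^ h * p ^ k)) ^ p
      with hS4
    rw [add_pow_split ya W hp.one_lt.le]
    have hmid : ∀ t ∈ range (p - 1),
        ya ^ (t + 1) * W ^ (p - (t + 1)) * ((p.choose (t + 1) : ℕ) : A)
          ∈ EI OM πM p V μ c iM (h + 1) := by
      intro t ht
      obtain ⟨cc, hcc⟩ := hp.dvd_choose_self (Nat.succ_ne_zero t)
        (by have := Finset.mem_range.mp ht; omega)
      obtain ⟨r, hr⟩ : ∃ r, p - (t + 1) = r + 1 :=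
        ⟨p - (t + 1) - 1, by have := Finset.mem_range.mp ht; omega⟩
      have hpw : (p : A) * ya * W ∈ EI OM πM p V μ c iM (h + 1) := by
        rw [hW, Finset.mul_sum]
        exact Ideal.sum_mem _ fun k hk =>
          pair_mem πM V μ c iM hp.one_lt.le ha' (hs' k hk) (b a) (b k)
      have e2 : ya ^ (t + 1) * W ^ (p - (t + 1)) * ((p.choose (t + 1) : ℕ) : A)
          = ((p : A) * ya * W) * (ya ^ t * W ^ r * (cc : A)) := by
        rw [hcc, hr]; push_cast; ring
      rw [e2]
      exact Ideal.mul_mem_right _ _ hpw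
    have e3 : ya ^ p + W ^ p
          + (∑ t ∈ range (p - 1), ya ^ (t + 1) * W ^ (p - (t + 1)) * ((p.choose (t + 1) : ℕ) : A))
          - (ya ^ p + S4)
        = (W ^ p - S4)
          + ∑ t ∈ range (p - 1), ya ^ (t + 1) * W ^ (p - (t + 1)) * ((p.choose (t + 1) : ℕ) : A) := by
      ring
    rw [e3]
    exact add_mem (ih hs') (Ideal.sum_mem _ hmid)

lemma step_mem {p : ℕ} (hp : p.Prime) (b : ℕ → OM) (h : ℕ) {Δ : A}
    (hΔ : Δ ∈ EI OM πM p V μ c iM h) :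
    ((∑ k ∈ range (μ + 1), C (R := OM) (b k * πM ^ (p ^ h * (iM k + p ^ k * c))) * X ^ (p ^ h * p ^ k))
        + Δ) ^ p
      - ∑ k ∈ range (μ + 1),
          (C (R := OM) (b k * πM ^ (p ^ h * (iM k + p ^ k * c))) * X ^ (p ^ h * p ^ k)) ^ p
      ∈ EI OM πM p V μ c iM (h + 1) := by
  set Y := ∑ k ∈ range (μ + 1), C (R := OM) (b k * πM ^ (p ^ h * (iM k + p ^ k * c))) * X ^ (p ^ h * p ^ k)
    with hY
  set S4 := ∑ k ∈ range (μ + 1),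
      (C (R := OM) (b k * πM ^ (p ^ h * (iM k + p ^ k * c))) * X ^ (p ^ h * p ^ k)) ^ p with hS4
  rw [add_pow_split Y Δ hp.one_lt.le]
  have e3 : Y ^ p + Δ ^ p
        + (∑ t ∈ range (p - 1), Y ^ (t + 1) * Δ ^ (p - (t + 1)) * ((p.choose (t + 1) : ℕ) : A))
        - S4
      = ((Y ^ p - S4) + Δ ^ p)
        + ∑ t ∈ range (p - 1), Y ^ (t + 1) * Δ ^ (p - (t + 1)) * ((p.choose (t + 1) : ℕ) : A) := by
    ring
  rw [e3]
  refine add_mem (add_mem ?_ (pow_p_mem πM V μ c iM hp hΔ)) (Ideal.sum_mem _ fun t ht => ?_)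
  · exact main_pow_sum πM V μ c iM hp b h (range (μ + 1)) fun k hk => by
      have := Finset.mem_range.mp hk; omega
  · obtain ⟨cc, hcc⟩ := hp.dvd_choose_self (Nat.succ_ne_zero t)
      (by have := Finset.mem_range.mp ht; omega)
    obtain ⟨r, hr⟩ : ∃ r, p - (t + 1) = r + 1 :=
      ⟨p - (t + 1) - 1, by have := Finset.mem_range.mp ht; omega⟩
    have e2 : Y ^ (t + 1) * Δ ^ (p - (t + 1)) * ((p.choose (t + 1) : ℕ) : A)
        = (p : A) * (Y ^ (t + 1) * Δ ^ r * (cc : A) * Δ) := by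
      rw [hcc, hr]; push_cast; ring
    rw [e2]
    exact p_mul_mem πM p V μ c iM (Ideal.mul_mem_left _ _ hΔ)

lemma chain_mem {p : ℕ} (hp : p.Prime) (sbar : ℕ → OM) {δ : A}
    (hδ : δ ∈ EI OM πM p V μ c iM 0) (h : ℕ) :
    ((∑ k ∈ range (μ + 1), C (R := OM) (sbar k * πM ^ (iM k + p ^ k * c)) * X ^ p ^ k) + δ) ^ p ^ h
      - ∑ k ∈ range (μ + 1), (C (R := OM) (sbar k * πM ^ (iM k + p ^ k * c)) * X ^ p ^ k) ^ p ^ h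
      ∈ EI OM πM p V μ c iM h := by
  induction h with
  | zero => simpa using hδ
  | succ h ih =>
    have hxpow : ∀ k, (C (R := OM) (sbar k * πM ^ (iM k + p ^ k * c)) * X ^ p ^ k) ^ p ^ h
        = C (R := OM) ((sbar k) ^ p ^ h * πM ^ (p ^ h * (iM k + p ^ k * c))) * X ^ (p ^ h * p ^ k) := by
      intro k
      rw [mul_pow, ← map_pow, mul_pow, ← pow_mul, ← pow_mul,
        Nat.mul_comm (iM k + p ^ k * c) (p ^ h), Nat.mul_comm (p ^ k) (p ^ h)]
    set S := ∑ k ∈ range (μ + 1), C (R := OM) (sbar k * πM ^ (iM k + p ^ k * c)) * X ^ p ^ k with hS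
    have hY : ∑ k ∈ range (μ + 1), (C (R := OM) (sbar k * πM ^ (iM k + p ^ k * c)) * X ^ p ^ k) ^ p ^ h
        = ∑ k ∈ range (μ + 1), C (R := OM) ((sbar k) ^ p ^ h * πM ^ (p ^ h * (iM k + p ^ k * c)))
            * X ^ (p ^ h * p ^ k) :=
      Finset.sum_congr rfl fun k _ => hxpow k
    have key := step_mem πM V μ c iM hp (fun k => (sbar k) ^ p ^ h) h (Δ := (S + δ) ^ p ^ h
      - ∑ k ∈ range (μ + 1), C (R := OM) ((sbar k) ^ p ^ h * πM ^ (p ^ h * (iM k + p ^ k * c)))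
          * X ^ (p ^ h * p ^ k)) (by rw [← hY]; exact ih)
    have e4 : (∑ k ∈ range (μ + 1), C (R := OM) ((sbar k) ^ p ^ h * πM ^ (p ^ h * (iM k + p ^ k * c)))
          * X ^ (p ^ h * p ^ k))
        + ((S + δ) ^ p ^ h
          - ∑ k ∈ range (μ + 1), C (R := OM) ((sbar k) ^ p ^ h * πM ^ (p ^ h * (iM k + p ^ k * c)))
              * X ^ (p ^ h * p ^ k)) = (S + δ) ^ p ^ h := by ring
    rw [e4] at key
    have e5 : ((S + δ) ^ p ^ h) ^ p = (S + δ) ^ p ^ (h + 1) := by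
      rw [← pow_mul, pow_succ]
    have e6 : ∀ k, (C (R := OM) ((sbar k) ^ p ^ h * πM ^ (p ^ h * (iM k + p ^ k * c)))
          * X ^ (p ^ h * p ^ k)) ^ p
        = (C (R := OM) (sbar k * πM ^ (iM k + p ^ k * c)) * X ^ p ^ k) ^ p ^ (h + 1) := by
      intro k
      rw [← hxpow k, ← pow_mul, ← pow_succ]
    rw [e5, Finset.sum_congr rfl fun k _ => e6 k] at key
    exact key

lemma final_mem (m ν : ℕ) (iL : ℕ → ℕ) {p : ℕ} {j : ℕ} (hj : j ≤ ν)
    (hV1 : (p : OM) ∈ Ideal.span {πM ^ V})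
    (hV2 : ∀ t, t < ν → m * iL t ≤ m * iL (t + 1) + V)
    {f : A} (hf : f ∈ EI OM πM p V μ c iM j) :
    C (R := OM) (πM ^ (m * iL j)) * f ∈
      Ideal.span {C (R := OM) πM, X} *
        Ideal.span {f : A | ∃ g ≤ ν + μ,
          f = C (R := OM) (πM ^ lamNat p m iL iM ν μ g c) * X ^ p ^ g} := by
  have chainV : ∀ r t, t + r ≤ ν → m * iL t ≤ m * iL (t + r) + r * V := by
    intro r
    induction r with
    | zero => intro t _; simp
    | succ r ih =>
      intro t ht
      have h1 := hV2 t (by omega)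
      have h2 := ih (t + 1) (by omega)
      have e : t + 1 + r = t + (r + 1) := by omega
      rw [e] at h2
      have e2 : (r + 1) * V = r * V + V := by ring
      omega
  obtain ⟨z, hz⟩ := Ideal.mem_span_singleton.mp hV1
  refine Submodule.span_induction ?_ ?_ ?_ ?_ hf
  · rintro x ⟨w, a, d, ⟨q, k', hq, hk', Hbr⟩, rfl⟩
    set g := j - q + k' with hg
    set Λ := lamNat p m iL iM ν μ g c with hΛdef
    set T := m * iL j + w * V + a with hT
    have hgle : g ≤ ν + μ := by omega
    have hΛ : Λ ≤ m * iL (j - q) + p ^ (j - q) * (iM k' + p ^ k' * c) :=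
      Nat.sInf_le ⟨j - q, k', by omega, hk', le_refl g, rfl⟩
    have hch : m * iL (j - q) ≤ m * iL j + q * V := by
      have h3 := chainV q (j - q) (by omega)
      rwa [show j - q + q = j by omega] at h3
    have e1 : C (R := OM) (πM ^ (m * iL j)) * (C (R := OM) ((p : OM) ^ w * πM ^ a) * X ^ d)
        = C (R := OM) (πM ^ T * z ^ w) * X ^ d := by
      rw [hz, hT, show m * iL j + w * V + a = m * iL j + V * w + a by ring]
      simp only [mul_pow, ← pow_mul, map_mul, map_pow, pow_add]
      ring
    rw [e1]
    have hTd : (Λ + 1 ≤ T ∧ p ^ g ≤ d) ∨ (Λ ≤ T ∧ p ^ g + 1 ≤ d) := by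
      rcases Hbr with ⟨H1, H2⟩ | ⟨H1, H2⟩
      · exact Or.inl ⟨by rw [hT]; linarith, H2⟩
      · exact Or.inr ⟨by rw [hT]; linarith, H2⟩
    rcases hTd with ⟨hT1, hd1⟩ | ⟨hT1, hd1⟩
    · have e7 : C (R := OM) (πM ^ T * z ^ w) * X ^ d
          = (C (R := OM) πM * (C (R := OM) (πM ^ Λ) * X ^ p ^ g))
            * (C (R := OM) (πM ^ (T - (Λ + 1)) * z ^ w) * X ^ (d - p ^ g)) := by
        calc C (R := OM) (πM ^ T * z ^ w) * X ^ d
            = C (R := OM) (πM ^ (1 + Λ + (T - (Λ + 1))) * z ^ w) * X ^ (p ^ g + (d - p ^ g)) := by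
              rw [show 1 + Λ + (T - (Λ + 1)) = T by omega, show p ^ g + (d - p ^ g) = d by omega]
          _ = _ := by simp only [pow_add, map_mul, pow_one]; ring
      rw [e7]
      exact Ideal.mul_mem_right _ _
        (Ideal.mul_mem_mul (Ideal.subset_span (Set.mem_insert _ _))
          (Ideal.subset_span ⟨g, hgle, rfl⟩))
    · have e8 : C (R := OM) (πM ^ T * z ^ w) * X ^ d
          = (X * (C (R := OM) (πM ^ Λ) * X ^ p ^ g))
            * (C (R := OM) (πM ^ (T - Λ) * z ^ w) * X ^ (d - p ^ g - 1)) := by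
        calc C (R := OM) (πM ^ T * z ^ w) * X ^ d
            = C (R := OM) (πM ^ (Λ + (T - Λ)) * z ^ w) * X ^ (1 + p ^ g + (d - p ^ g - 1)) := by
              rw [show Λ + (T - Λ) = T by omega, show 1 + p ^ g + (d - p ^ g - 1) = d by omega]
          _ = _ := by simp only [pow_add, map_mul, pow_one]; ring
      rw [e8]
      exact Ideal.mul_mem_right _ _
        (Ideal.mul_mem_mul (Ideal.subset_span (Set.mem_insert_of_mem _ rfl))
          (Ideal.subset_span ⟨g, hgle, rfl⟩))
  · simp
  · intro x y _ _ hx hy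
    rw [mul_add]; exact add_mem hx hy
  · intro r x _ hx
    rw [smul_eq_mul, mul_left_comm]
    exact Ideal.mul_mem_left _ _ hx

end Ring

end Stmt13Aux

open PowerSeries in
/-- Lemma `epspower`.  Let `c ∈ ℕ₀` and `0 ≤ j ≤ ν`.  Let
`s_0, …, s_μ ∈ R`, let `δ_G ∈ (π_M, ε)·I'_G` where
`I'_G = (π_M^{φ̃^k_{M/L}(c)} ε^{p^k} : 0 ≤ k ≤ μ)`, and set `u = π_L/π_M^m ∈ O_Mˣ`.
Then
`π_L^{i_j}·(Σ_k s_k π_M^{φ̃^k_{M/L}(c)} ε^{p^k} + δ_G)^{p^j}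
  ≡ u^{i_j} Σ_k s_k^{p^j} π_M^{φ̃^{j,m}_{L/K}(φ̃^k_{M/L}(c))} ε^{p^{j+k}}`
modulo `(π_M, ε)·I_{FG}`, where `I_{FG} = (π_M^{λ^g_{M/K}(c)} ε^{p^g} : 0 ≤ g ≤ ν+μ)`.
(Here `φ̃^k_{M/L}(c) = i'_k + p^k c` and `φ̃^{j,m}_{L/K}(y) = m·i_j + p^j y`.) -/
theorem stmt13
    (p : ℕ) [hp : Fact p.Prime]
    (OK : Type) [CommRing OK] [IsDomain OK] [IsDiscreteValuationRing OK]
    [IsAdicComplete (IsLocalRing.maximalIdeal OK) OK]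
    [CharP (IsLocalRing.ResidueField OK) p] [PerfectRing (IsLocalRing.ResidueField OK) p]
    (OL : Type) [CommRing OL] [IsDomain OL] [IsDiscreteValuationRing OL]
    [IsAdicComplete (IsLocalRing.maximalIdeal OL) OL]
    [Algebra OK OL]
    (OM : Type) [CommRing OM] [IsDomain OM] [IsDiscreteValuationRing OM]
    [IsAdicComplete (IsLocalRing.maximalIdeal OM) OM]
    [Algebra OL OM] [Algebra OK OM] [IsScalarTower OK OL OM]
    (K L M : Type) [Field K] [Field L] [Field M]
    [Algebra OK K] [IsFractionRing OK K]
    [Algebra OL L] [IsFractionRing OL L]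
    [Algebra OM M] [IsFractionRing OM M]
    [Algebra K L] [Algebra OK L] [IsScalarTower OK K L] [IsScalarTower OK OL L]
    [Algebra L M] [Algebra OL M] [IsScalarTower OL L M] [IsScalarTower OL OM M]
    [Algebra K M] [IsScalarTower K L M]
    [Algebra.IsSeparable K L] [FiniteDimensional K L]
    [Algebra.IsSeparable L M] [FiniteDimensional L M]
    [Algebra.IsSeparable K M]
    -- degrees
    (n a ν : ℕ) (hna : n = a * p ^ ν) (hpa : ¬ p ∣ a) (hn1 : 1 < n)
    (hdeg : Module.finrank K L = n)
    (m b μ : ℕ) (hmb : m = b * p ^ μ) (hpb : ¬ p ∣ b) (hm1 : 1 < m)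
    (hdegM : Module.finrank L M = m)
    -- uniformizers, total ramification
    (πK : OK) (hπK : Irreducible πK) (πL : OL) (hπL : Irreducible πL)
    (πM : OM) (hπM : Irreducible πM)
    (htot : Associated (algebraMap OK OL πK) (πL ^ n))
    (hres : ∀ x : OL, ∃ y : OK, x - algebraMap OK OL y ∈ IsLocalRing.maximalIdeal OL)
    (htotM : Associated (algebraMap OL OM πL) (πM ^ m))
    (hresM : ∀ x : OM, ∃ y : OL, x - algebraMap OL OM y ∈ IsLocalRing.maximalIdeal OM)
    -- Teichmüller representatives of O_K and O_L
    (TR : Set OK) (hTR0 : (0 : OK) ∈ TR)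
    (hTRbij : Set.BijOn (IsLocalRing.residue OK) TR Set.univ)
    (hTRmul : ∀ r ∈ TR, ∀ s ∈ TR, r * s ∈ TR)
    (TRL : Set OL) (hTRL0 : (0 : OL) ∈ TRL)
    (hTRLbij : Set.BijOn (IsLocalRing.residue OL) TRL Set.univ)
    (hTRLmul : ∀ r ∈ TRL, ∀ s ∈ TRL, r * s ∈ TRL)
    -- F̂ : expansion of π_K in π_L, and the indices i_j of L/K
    (aF : ℕ → OK) (haF : ∀ h, aF h ∈ TR)
    (hFeval : ∀ N : ℕ,
      algebraMap OK OL πK - ∑ h ∈ Finset.range N, algebraMap OK OL (aF h) * πL ^ (h + n)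
        ∈ Ideal.span {πL ^ (n + N)})
    (iL : ℕ → ℕ)
    (hiL : ∀ j ≤ ν, (iL j : ℕ∞) = insepIdx p n ν aF (piVal πL (p : OL)) j)
    -- Ĝ : expansion of π_L in π_M, and the indices i'_k of M/L
    (aG : ℕ → OL) (haG : ∀ h, aG h ∈ TRL)
    (hGeval : ∀ N : ℕ,
      algebraMap OL OM πL - ∑ h ∈ Finset.range N, algebraMap OL OM (aG h) * πM ^ (h + m)
        ∈ Ideal.span {πM ^ (m + N)})
    (iM : ℕ → ℕ)
    (hiM : ∀ k ≤ μ, (iM k : ℕ∞) = insepIdx p m μ aG (piVal πM (p : OM)) k)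
    -- Ĥ : expansion of π_K in π_M, and the indices i''_l of M/K
    (aH : ℕ → OK) (haH : ∀ h, aH h ∈ TR)
    (hHeval : ∀ N : ℕ,
      algebraMap OK OM πK
          - ∑ h ∈ Finset.range N, algebraMap OK OM (aH h) * πM ^ (h + n * m)
        ∈ Ideal.span {πM ^ (n * m + N)})
    (iMK : ℕ → ℕ)
    (hiMK : ∀ l ≤ ν + μ, (iMK l : ℕ∞) = insepIdx p (n * m) (ν + μ) aH (piVal πM (p : OM)) l)
    -- the data of the lemma
    (c : ℕ) (j : ℕ) (hj : j ≤ ν)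
    (s : ℕ → OK) (hs : ∀ k ≤ μ, s k ∈ TR)
    (u : OMˣ) (hu : (u : OM) * πM ^ m = algebraMap OL OM πL)
    (δG : PowerSeries OM)
    (hδG : δG ∈ Ideal.span {(C (R := OM)) πM, (X : PowerSeries OM)} *
      Ideal.span {f : PowerSeries OM | ∃ k ≤ μ,
        f = (C (R := OM)) (πM ^ (iM k + p ^ k * c)) * (X : PowerSeries OM) ^ (p ^ k)}) :
    (C (R := OM)) (algebraMap OL OM πL ^ iL j) *
        (∑ k ∈ Finset.range (μ + 1),
            (C (R := OM)) (algebraMap OK OM (s k) * πM ^ (iM k + p ^ k * c)) *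
              (X : PowerSeries OM) ^ (p ^ k) + δG) ^ (p ^ j)
      - (C (R := OM)) ((u : OM) ^ iL j) *
          ∑ k ∈ Finset.range (μ + 1),
            (C (R := OM)) (algebraMap OK OM (s k) ^ (p ^ j) *
                πM ^ (m * iL j + p ^ j * (iM k + p ^ k * c))) *
              (X : PowerSeries OM) ^ (p ^ (j + k))
      ∈ Ideal.span {(C (R := OM)) πM, (X : PowerSeries OM)} *
          Ideal.span {f : PowerSeries OM | ∃ g ≤ ν + μ,
            f = (C (R := OM)) (πM ^ lamNat p m iL iM ν μ g c) *
              (X : PowerSeries OM) ^ (p ^ g)} := by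
  

  -- construct the constant V
  obtain ⟨V, hV1, hV2⟩ : ∃ V : ℕ, ((p : ℕ) : OM) ∈ Ideal.span {πM ^ V} ∧
      ∀ t, t < ν → m * iL t ≤ m * iL (t + 1) + V := by
    by_cases hp0 : ((p : ℕ) : OM) = 0
    · refine ⟨∑ t ∈ Finset.range (ν + 1), m * iL t, by rw [hp0]; exact zero_mem _, fun t ht => ?_⟩
      have h1 : m * iL t ≤ ∑ t ∈ Finset.range (ν + 1), m * iL t :=
        Finset.single_le_sum (f := fun t => m * iL t) (fun i _ => Nat.zero_le _)
          (Finset.mem_range.mpr (by omega))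
      omega
    · have hpl : ((p : ℕ) : OL) ≠ 0 := by
        intro h0
        apply hp0
        have h1 := congrArg (algebraMap OL OM) h0
        rwa [map_natCast, map_zero] at h1
      obtain ⟨K0, hassoc⟩ := IsDiscreteValuationRing.associated_pow_irreducible hpl hπL
      obtain ⟨u0, hu0⟩ := hassoc
      have hpiv : piVal πL ((p : ℕ) : OL) = (K0 : ℕ∞) := by
        unfold piVal
        apply le_antisymm
        · refine iSup₂_le fun k hk => ?_
          have hdvd : πL ^ k ∣ ((p : ℕ) : OL) := Ideal.mem_span_singleton.mp hk
          have hdvd2 : πL ^ k ∣ πL ^ K0 := hdvd.trans ⟨↑u0, hu0.symm⟩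
          have hk0 : k ≤ K0 := (pow_dvd_pow_iff hπL.ne_zero hπL.not_isUnit).mp hdvd2
          exact_mod_cast Nat.cast_le.mpr hk0
        · have hmem : K0 ∈ {k : ℕ | ((p : ℕ) : OL) ∈ Ideal.span {πL ^ k}} := by
            simp only [Set.mem_setOf_eq]
            exact Ideal.mem_span_singleton.mpr ⟨↑u0⁻¹, (Units.eq_mul_inv_iff_mul_eq u0).mpr hu0⟩
          exact le_iSup₂ (f := fun k (_ : k ∈ {k : ℕ | ((p : ℕ) : OL) ∈ Ideal.span {πL ^ k}})
            => (k : ℕ∞)) K0 hmem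
      have hstep : ∀ t, t < ν → iL t ≤ iL (t + 1) + K0 := by
        intro t ht
        have h1 := hiL t (by omega)
        have h2 := hiL (t + 1) (by omega)
        rw [hpiv] at h1 h2
        have hle : (iL t : ℕ∞) ≤ ((iL (t + 1) : ℕ) : ℕ∞) + (K0 : ℕ∞) := by
          rw [h1, h2]
          unfold insepIdx
          rw [← tsub_le_iff_right]
          refine le_iInf₂ fun j1 hj1 => ?_
          rw [tsub_le_iff_right]
          have hj11 : t + 1 ≤ j1 := hj1.1
          have hmem : j1 ∈ Set.Icc t ν := ⟨by omega, hj1.2⟩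
          refine le_trans (iInf₂_le j1 hmem) ?_
          have e9 : ((j1 - t : ℕ) : ℕ∞) = ((j1 - (t + 1) : ℕ) : ℕ∞) + 1 := by
            have e10 : j1 - t = (j1 - (t + 1)) + 1 := by omega
            rw [e10]; push_cast; ring
          rw [e9, add_one_mul, ← add_assoc]
        have hle2 : (iL t : ℕ∞) ≤ ((iL (t + 1) + K0 : ℕ) : ℕ∞) := by
          rw [Nat.cast_add]; exact hle
        exact_mod_cast hle2
      refine ⟨m * K0, ?_, fun t ht => by
        simpa [Nat.mul_add] using Nat.mul_le_mul_left m (hstep t ht)⟩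
      apply Ideal.mem_span_singleton.mpr
      have hpl2 : ((p : ℕ) : OL) = πL ^ K0 * ↑u0⁻¹ :=
        (Units.eq_mul_inv_iff_mul_eq u0).mpr hu0
      refine ⟨(u : OM) ^ K0 * algebraMap OL OM ↑u0⁻¹, ?_⟩
      have h3 : ((p : ℕ) : OM) = algebraMap OL OM ((p : ℕ) : OL) := (map_natCast _ p).symm
      rw [h3, hpl2, map_mul, map_pow, ← hu, mul_pow, ← pow_mul]
      ring
  -- base: δG lands in the level-0 error ideal
  have hδ0 : δG ∈ Stmt13Aux.EI OM πM p V μ c iM 0 := by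
    have h := hδG
    rw [Ideal.span_mul_span'] at h
    refine Ideal.span_le.mpr ?_ h
    rintro x ⟨r, hr, t, ⟨k, hk, rfl⟩, rfl⟩
    simp only [Set.mem_insert_iff, Set.mem_singleton_iff] at hr
    rcases hr with rfl | rfl
    all_goals beta_reduce
    · have e1 : C (R := OM) πM * (C (R := OM) (πM ^ (iM k + p ^ k * c)) * X ^ p ^ k)
          = C (R := OM) ((p : OM) ^ 0 * πM ^ (iM k + p ^ k * c + 1)) * X ^ p ^ k := by
        simp only [pow_zero, one_mul, pow_succ, map_mul]
        ring
      rw [e1]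
      exact Stmt13Aux.gen_mem πM p V μ c iM (Stmt13Aux.MP.base_pi hk)
    · have e1 : X * (C (R := OM) (πM ^ (iM k + p ^ k * c)) * X ^ p ^ k)
          = C (R := OM) ((p : OM) ^ 0 * πM ^ (iM k + p ^ k * c)) * X ^ (p ^ k + 1) := by
        simp only [pow_zero, one_mul, pow_succ]
        ring
      rw [e1]
      exact Stmt13Aux.gen_mem πM p V μ c iM (Stmt13Aux.MP.base_X hk)
  -- the chain lemma at level j
  have hΔ := Stmt13Aux.chain_mem πM V μ c iM hp.out (fun k => algebraMap OK OM (s k)) hδ0 j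
  -- final membership
  have hfin := Stmt13Aux.final_mem πM V μ c iM m ν iL hj hV1 hV2 hΔ
  -- reduction of the goal
  have key : (C (R := OM)) (algebraMap OL OM πL ^ iL j) *
        (∑ k ∈ Finset.range (μ + 1),
            (C (R := OM)) (algebraMap OK OM (s k) * πM ^ (iM k + p ^ k * c)) *
              (X : PowerSeries OM) ^ (p ^ k) + δG) ^ (p ^ j)
      - (C (R := OM)) ((u : OM) ^ iL j) *
          ∑ k ∈ Finset.range (μ + 1),
            (C (R := OM)) (algebraMap OK OM (s k) ^ (p ^ j) *
                πM ^ (m * iL j + p ^ j * (iM k + p ^ k * c))) *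
              (X : PowerSeries OM) ^ (p ^ (j + k))
      = C (R := OM) ((u : OM) ^ iL j) *
          (C (R := OM) (πM ^ (m * iL j)) *
            ((∑ k ∈ Finset.range (μ + 1),
                C (R := OM) (algebraMap OK OM (s k) * πM ^ (iM k + p ^ k * c)) * X ^ p ^ k + δG) ^ p ^ j
              - ∑ k ∈ Finset.range (μ + 1),
                  (C (R := OM) (algebraMap OK OM (s k) * πM ^ (iM k + p ^ k * c)) * X ^ p ^ k)
                    ^ p ^ j)) := by
    have hterm : ∀ k,
        (C (R := OM)) (algebraMap OK OM (s k) ^ (p ^ j) *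
            πM ^ (m * iL j + p ^ j * (iM k + p ^ k * c))) *
          (X : PowerSeries OM) ^ (p ^ (j + k))
        = C (R := OM) (πM ^ (m * iL j)) *
            (C (R := OM) (algebraMap OK OM (s k) * πM ^ (iM k + p ^ k * c)) * X ^ p ^ k) ^ p ^ j := by
      intro k
      simp only [map_mul, map_pow, mul_pow, ← pow_mul]
      rw [show p ^ (j + k) = p ^ k * p ^ j by rw [pow_add]; ring,
        show m * iL j + p ^ j * (iM k + p ^ k * c) = m * iL j + (iM k + p ^ k * c) * p ^ j
          by ring]
      rw [pow_add]
      ring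
    rw [← hu]
    rw [show (∑ k ∈ Finset.range (μ + 1),
          (C (R := OM)) (algebraMap OK OM (s k) ^ (p ^ j) *
              πM ^ (m * iL j + p ^ j * (iM k + p ^ k * c))) *
            (X : PowerSeries OM) ^ (p ^ (j + k)))
        = ∑ k ∈ Finset.range (μ + 1), C (R := OM) (πM ^ (m * iL j)) *
            (C (R := OM) (algebraMap OK OM (s k) * πM ^ (iM k + p ^ k * c)) * X ^ p ^ k) ^ p ^ j
        from Finset.sum_congr rfl fun k _ => hterm k]
    rw [← Finset.mul_sum]
    have e11 : (C (R := OM)) (((u : OM) * πM ^ m) ^ iL j)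
        = C (R := OM) ((u : OM) ^ iL j) * C (R := OM) (πM ^ (m * iL j)) := by
      rw [mul_pow, ← pow_mul, map_mul]
    rw [e11]
    ring
  rw [key]
  exact Ideal.mul_mem_left _ _ hfin
end
end

section
/- Let 0 ≤ l ≤ ν+μ and suppose there exists l₀ ≤ l such that S_l^{l₀}(0) has exactly one element. Then 0 ∈ T_l(M/K), i.e. there exists l₀' ≤ l with |S_l^{l₀'}(0)| = 1 and |S_l^a(0)| = 0 for all 0 ≤ a < l₀'. -/
noncomputable section

private lemma itilde_anti' (p n : ℕ) {OK : Type*} [CommRing OK] (aF : ℕ → OK) {j j' : ℕ}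
    (h : j ≤ j') : itilde p n aF j' ≤ itilde p n aF j := by
  refine le_iInf₂ fun h1 hh1 => iInf₂_le h1 ⟨hh1.1.trans h, hh1.2⟩

private lemma insepIdx_anti' (p n ν' : ℕ) {OK : Type*} [CommRing OK] (aF : ℕ → OK) (v : ℕ∞)
    {k k' : ℕ} (h : k ≤ k') (h2 : k' ≤ ν') :
    insepIdx p n ν' aF v k' ≤ insepIdx p n ν' aF v k := by
  refine le_iInf₂ fun j1 hj1 => ?_
  obtain ⟨hj1a, hj1b⟩ := hj1
  by_cases hc : k' ≤ j1
  · refine (iInf₂_le j1 ⟨hc, hj1b⟩).trans ?_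
    refine add_le_add le_rfl (mul_le_mul' ?_ le_rfl)
    exact_mod_cast Nat.cast_le.mpr (Nat.sub_le_sub_left h j1)
  · push_neg at hc
    calc insepIdx p n ν' aF v k' ≤ itilde p n aF k' + ((k' - k' : ℕ) : ℕ∞) * v :=
          iInf₂_le k' ⟨le_rfl, h2⟩
      _ = itilde p n aF k' := by simp
      _ ≤ itilde p n aF j1 := itilde_anti' p n aF hc.le
      _ ≤ itilde p n aF j1 + ((j1 - k : ℕ) : ℕ∞) * v := le_self_add

/-- Lemma `c0`.  Let `0 ≤ l ≤ ν+μ` and suppose there exists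
`l₀ ≤ l` such that `S_l^{l₀}(0)` has exactly one element.  Then `0 ∈ T_l(M/K)`:
there exists `l₀' ≤ l` with `|S_l^{l₀'}(0)| = 1` and `S_l^a(0) = ∅` for all `a < l₀'`. -/
theorem stmt14
    (p : ℕ) [hp : Fact p.Prime]
    (OK : Type) [CommRing OK] [IsDomain OK] [IsDiscreteValuationRing OK]
    [IsAdicComplete (IsLocalRing.maximalIdeal OK) OK]
    [CharP (IsLocalRing.ResidueField OK) p] [PerfectRing (IsLocalRing.ResidueField OK) p]
    (OL : Type) [CommRing OL] [IsDomain OL] [IsDiscreteValuationRing OL]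
    [IsAdicComplete (IsLocalRing.maximalIdeal OL) OL]
    [Algebra OK OL]
    (OM : Type) [CommRing OM] [IsDomain OM] [IsDiscreteValuationRing OM]
    [IsAdicComplete (IsLocalRing.maximalIdeal OM) OM]
    [Algebra OL OM] [Algebra OK OM] [IsScalarTower OK OL OM]
    (K L M : Type) [Field K] [Field L] [Field M]
    [Algebra OK K] [IsFractionRing OK K]
    [Algebra OL L] [IsFractionRing OL L]
    [Algebra OM M] [IsFractionRing OM M]
    [Algebra K L] [Algebra OK L] [IsScalarTower OK K L] [IsScalarTower OK OL L]
    [Algebra L M] [Algebra OL M] [IsScalarTower OL L M] [IsScalarTower OL OM M]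
    [Algebra K M] [IsScalarTower K L M]
    [Algebra.IsSeparable K L] [FiniteDimensional K L]
    [Algebra.IsSeparable L M] [FiniteDimensional L M]
    [Algebra.IsSeparable K M]
    -- degrees
    (n a ν : ℕ) (hna : n = a * p ^ ν) (hpa : ¬ p ∣ a) (hn1 : 1 < n)
    (hdeg : Module.finrank K L = n)
    (m b μ : ℕ) (hmb : m = b * p ^ μ) (hpb : ¬ p ∣ b) (hm1 : 1 < m)
    (hdegM : Module.finrank L M = m)
    -- uniformizers, total ramification
    (πK : OK) (hπK : Irreducible πK) (πL : OL) (hπL : Irreducible πL)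
    (πM : OM) (hπM : Irreducible πM)
    (htot : Associated (algebraMap OK OL πK) (πL ^ n))
    (hres : ∀ x : OL, ∃ y : OK, x - algebraMap OK OL y ∈ IsLocalRing.maximalIdeal OL)
    (htotM : Associated (algebraMap OL OM πL) (πM ^ m))
    (hresM : ∀ x : OM, ∃ y : OL, x - algebraMap OL OM y ∈ IsLocalRing.maximalIdeal OM)
    -- Teichmüller representatives of O_K and O_L
    (TR : Set OK) (hTR0 : (0 : OK) ∈ TR)
    (hTRbij : Set.BijOn (IsLocalRing.residue OK) TR Set.univ)
    (hTRmul : ∀ r ∈ TR, ∀ s ∈ TR, r * s ∈ TR)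
    (TRL : Set OL) (hTRL0 : (0 : OL) ∈ TRL)
    (hTRLbij : Set.BijOn (IsLocalRing.residue OL) TRL Set.univ)
    (hTRLmul : ∀ r ∈ TRL, ∀ s ∈ TRL, r * s ∈ TRL)
    -- F̂ : expansion of π_K in π_L, and the indices i_j of L/K
    (aF : ℕ → OK) (haF : ∀ h, aF h ∈ TR)
    (hFeval : ∀ N : ℕ,
      algebraMap OK OL πK - ∑ h ∈ Finset.range N, algebraMap OK OL (aF h) * πL ^ (h + n)
        ∈ Ideal.span {πL ^ (n + N)})
    (iL : ℕ → ℕ)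
    (hiL : ∀ j ≤ ν, (iL j : ℕ∞) = insepIdx p n ν aF (piVal πL (p : OL)) j)
    -- Ĝ : expansion of π_L in π_M, and the indices i'_k of M/L
    (aG : ℕ → OL) (haG : ∀ h, aG h ∈ TRL)
    (hGeval : ∀ N : ℕ,
      algebraMap OL OM πL - ∑ h ∈ Finset.range N, algebraMap OL OM (aG h) * πM ^ (h + m)
        ∈ Ideal.span {πM ^ (m + N)})
    (iM : ℕ → ℕ)
    (hiM : ∀ k ≤ μ, (iM k : ℕ∞) = insepIdx p m μ aG (piVal πM (p : OM)) k)
    -- Ĥ : expansion of π_K in π_M, and the indices i''_l of M/K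
    (aH : ℕ → OK) (haH : ∀ h, aH h ∈ TR)
    (hHeval : ∀ N : ℕ,
      algebraMap OK OM πK
          - ∑ h ∈ Finset.range N, algebraMap OK OM (aH h) * πM ^ (h + n * m)
        ∈ Ideal.span {πM ^ (n * m + N)})
    (iMK : ℕ → ℕ)
    (hiMK : ∀ l ≤ ν + μ, (iMK l : ℕ∞) = insepIdx p (n * m) (ν + μ) aH (piVal πM (p : OM)) l)
    -- the claim
    (l : ℕ) (hl : l ≤ ν + μ)
    (hS : ∃ l0 ≤ l, ∃! jk : ℕ × ℕ, jk ∈ sSetMK p m iL iM ν μ l l0 (0 : ℝ)) :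
    ∃ l0' ≤ l, (∃! jk : ℕ × ℕ, jk ∈ sSetMK p m iL iM ν μ l l0' (0 : ℝ)) ∧
      ∀ a' < l0', sSetMK p m iL iM ν μ l a' (0 : ℝ) = ∅ := by
  classical
  -- basic positivity facts
  have hpR : (0:ℝ) < (p:ℝ) := by exact_mod_cast hp.out.pos
  -- membership criterion for the S-sets at x = 0
  have hmem_iff : ∀ (j k a : ℕ), (j, k) ∈ sSetMK p m iL iM ν μ l a 0 ↔
      j ≤ ν ∧ k ≤ μ ∧ j + k = a ∧
        (m:ℝ) * iL j + (p:ℝ)^j * (iM k:ℝ) = lamMK p m iL iM ν μ l 0 := by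
    intro j k a; simp [sSetMK]
  -- λ is a lower bound on the values
  have hbdd : BddBelow {y : ℝ | ∃ j k : ℕ, j ≤ ν ∧ k ≤ μ ∧ j + k ≤ l ∧
      y = (m : ℝ) * iL j + (p : ℝ) ^ j * ((iM k : ℝ) + (p : ℝ) ^ k * 0)} := by
    refine ⟨0, fun y hy => ?_⟩
    obtain ⟨j, k, _, _, _, rfl⟩ := hy
    positivity
  have hlam_le : ∀ j k : ℕ, j ≤ ν → k ≤ μ → j + k ≤ l →
      lamMK p m iL iM ν μ l 0 ≤ (m:ℝ) * iL j + (p:ℝ)^j * (iM k:ℝ) := by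
    intro j k h1 h2 h3
    exact csInf_le hbdd ⟨j, k, h1, h2, h3, by ring⟩
  -- antitonicity of the indices of inseparability
  have hiManti : ∀ {k k' : ℕ}, k ≤ k' → k' ≤ μ → iM k' ≤ iM k := by
    intro k k' h1 h2
    have e1 := hiM k (h1.trans h2); have e2 := hiM k' h2
    have h3 : (iM k' : ℕ∞) ≤ (iM k : ℕ∞) := by
      rw [e1, e2]; exact insepIdx_anti' p m μ aG _ h1 h2
    exact_mod_cast h3
  have hiLanti : ∀ {j j' : ℕ}, j ≤ j' → j' ≤ ν → iL j' ≤ iL j := by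
    intro j j' h1 h2
    have e1 := hiL j (h1.trans h2); have e2 := hiL j' h2
    have h3 : (iL j' : ℕ∞) ≤ (iL j : ℕ∞) := by
      rw [e1, e2]; exact insepIdx_anti' p n ν aF _ h1 h2
    exact_mod_cast h3
  -- the leading coefficient of Ĝ is nonzero
  have haG0 : aG 0 ≠ 0 := by
    intro h0
    have h1 := hGeval 1
    rw [Finset.sum_range_one, h0, map_zero, zero_mul, sub_zero, Ideal.mem_span_singleton] at h1
    obtain ⟨c, hc⟩ := h1
    obtain ⟨u, hu⟩ := htotM
    have hm' : πM ^ m * (1:OM) = πM ^ m * (πM * (c * u)) := by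
      conv_lhs => rw [mul_one, ← hu, hc]
      ring
    have h2 : (1:OM) = πM * (c * u) :=
      mul_left_cancel₀ (pow_ne_zero _ hπM.ne_zero) hm'
    exact hπM.not_isUnit (IsUnit.of_mul_eq_one _ h2.symm)
  -- v_p(m) = μ
  have hb0 : b ≠ 0 := by
    rintro rfl
    rw [zero_mul] at hmb
    omega
  have hvpm : padicValNat p m = μ := by
    rw [hmb, padicValNat.mul hb0 (pow_ne_zero _ hp.out.ne_zero),
      padicValNat.eq_zero_of_not_dvd hpb, padicValNat.prime_pow, zero_add]
  -- i'_μ = 0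
  have hiMμ : iM μ = 0 := by
    have e := hiM μ le_rfl
    have h1 : insepIdx p m μ aG (piVal πM (p:OM)) μ ≤ ((0:ℕ):ℕ∞) := by
      calc insepIdx p m μ aG (piVal πM (p:OM)) μ
          ≤ itilde p m aG μ + ((μ - μ : ℕ) : ℕ∞) * piVal πM (p:OM) :=
            iInf₂_le μ ⟨le_rfl, le_rfl⟩
        _ = itilde p m aG μ := by simp
        _ ≤ ((0:ℕ):ℕ∞) := iInf₂_le 0 ⟨by simp [hvpm], haG0⟩
    rw [← e] at h1
    exact_mod_cast le_antisymm h1 zero_le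
  -- set up the minimal level A
  obtain ⟨l0, hl0l, J, hJmem, hJuniq⟩ := hS
  have hexP : ∃ a, (sSetMK p m iL iM ν μ l a (0:ℝ)).Nonempty := ⟨l0, J, hJmem⟩
  set A := Nat.find hexP with hAdef
  have hAle : A ≤ l0 := Nat.find_min' hexP ⟨J, hJmem⟩
  have hAl : A ≤ l := hAle.trans hl0l
  have hempty : ∀ a' < A, sSetMK p m iL iM ν μ l a' (0:ℝ) = ∅ := fun a' ha' =>
    Set.not_nonempty_iff_eq_empty.mp (Nat.find_min hexP ha')
  by_cases hu : ∃! jk : ℕ × ℕ, jk ∈ sSetMK p m iL iM ν μ l A 0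
  · exact ⟨A, hAl, hu, hempty⟩
  exfalso
  -- get two distinct elements of S^A with distinct first coordinates
  obtain ⟨x0, hx0⟩ := Nat.find_spec hexP
  have h2 : ∃ y ∈ sSetMK p m iL iM ν μ l A 0, y ≠ x0 := by
    by_contra hcon
    push_neg at hcon
    exact hu ⟨x0, hx0, hcon⟩
  obtain ⟨y0, hy0, hyx⟩ := h2
  obtain ⟨j1, k1, j2, k2, h1mem, h2mem, hjlt⟩ :
      ∃ j1 k1 j2 k2, (j1, k1) ∈ sSetMK p m iL iM ν μ l A 0 ∧
        (j2, k2) ∈ sSetMK p m iL iM ν μ l A 0 ∧ j1 < j2 := by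
    rcases Nat.lt_trichotomy x0.1 y0.1 with h | h | h
    · exact ⟨x0.1, x0.2, y0.1, y0.2, hx0, hy0, h⟩
    · exfalso
      apply hyx
      have hs1 := ((hmem_iff x0.1 x0.2 A).mp hx0).2.2.1
      have hs2 := ((hmem_iff y0.1 y0.2 A).mp hy0).2.2.1
      have : y0.2 = x0.2 := by omega
      exact Prod.ext h.symm this
    · exact ⟨y0.1, y0.2, x0.1, x0.2, hy0, hx0, h⟩
  obtain ⟨hj1ν, hk1μ, hsum1, hV1⟩ := (hmem_iff j1 k1 A).mp h1mem
  obtain ⟨hj2ν, hk2μ, hsum2, hV2⟩ := (hmem_iff j2 k2 A).mp h2mem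
  have hk2k1 : k2 < k1 := by omega
  -- Step 1 : j2 + k1 > l
  have hj2k1 : l < j2 + k1 := by
    by_contra hle
    push_neg at hle
    have hmono : (iM k1 : ℝ) ≤ iM k2 := by exact_mod_cast hiManti hk2k1.le hk1μ
    have hVle : (m:ℝ)*iL j2 + (p:ℝ)^j2 * iM k1 ≤ (m:ℝ)*iL j2 + (p:ℝ)^j2 * iM k2 :=
      add_le_add_right (mul_le_mul_of_nonneg_left hmono (by positivity)) _
    have heq : (m:ℝ)*iL j2 + (p:ℝ)^j2 * iM k1 = lamMK p m iL iM ν μ l 0 :=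
      le_antisymm (hVle.trans_eq hV2) (hlam_le j2 k1 hj2ν hk1μ hle)
    have h3 : (p:ℝ)^j2 * (iM k1:ℝ) = (p:ℝ)^j2 * (iM k2:ℝ) := by
      have := heq.trans hV2.symm
      linarith
    have hMeq : (iM k1 : ℝ) = (iM k2 : ℝ) :=
      mul_left_cancel₀ (pow_pos hpR j2).ne' h3
    have hVnew : (m:ℝ)*iL j1 + (p:ℝ)^j1 * iM k2 = lamMK p m iL iM ν μ l 0 := by
      rw [← hMeq]; exact hV1
    have hmemnew : (j1, k2) ∈ sSetMK p m iL iM ν μ l (j1 + k2) 0 :=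
      (hmem_iff j1 k2 (j1 + k2)).mpr ⟨hj1ν, hk2μ, rfl, hVnew⟩
    have hlt : j1 + k2 < A := by omega
    rw [hempty _ hlt] at hmemnew
    exact hmemnew
  -- Step 2 : A < l0
  have hAlt : A < l0 := by
    rcases lt_or_eq_of_le hAle with h | h
    · exact h
    · exact absurd (h ▸ ⟨J, hJmem, hJuniq⟩) hu
  -- Step 3 : (j2, l0 - j2) ∈ S^{l0}, so J = (j2, l0 - j2)
  have hK2k2 : k2 ≤ l0 - j2 := by omega
  have hK2μ : l0 - j2 ≤ μ := by omega
  have hK2a : j2 + (l0 - j2) = l0 := by omega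
  have hV2' : (m:ℝ)*iL j2 + (p:ℝ)^j2 * iM (l0 - j2) = lamMK p m iL iM ν μ l 0 := by
    have hmono : (iM (l0 - j2) : ℝ) ≤ iM k2 := by exact_mod_cast hiManti hK2k2 hK2μ
    refine le_antisymm ?_ (hlam_le j2 (l0 - j2) hj2ν hK2μ (by omega))
    exact (add_le_add_right (mul_le_mul_of_nonneg_left hmono (by positivity)) _).trans_eq hV2
  have hmem2' : (j2, l0 - j2) ∈ sSetMK p m iL iM ν μ l l0 0 :=
    (hmem_iff j2 (l0 - j2) l0).mpr ⟨hj2ν, hK2μ, hK2a, hV2'⟩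
  have hJ2 : J = (j2, l0 - j2) := (hJuniq _ hmem2').symm
  -- Step 4 : case split
  by_cases hcase : l0 ≤ j1 + μ
  · -- (j1, l0 - j1) is a second element of S^{l0}
    have hK1k1 : k1 ≤ l0 - j1 := by omega
    have hK1μ : l0 - j1 ≤ μ := by omega
    have hK1a : j1 + (l0 - j1) = l0 := by omega
    have hV1' : (m:ℝ)*iL j1 + (p:ℝ)^j1 * iM (l0 - j1) = lamMK p m iL iM ν μ l 0 := by
      have hmono : (iM (l0 - j1) : ℝ) ≤ iM k1 := by exact_mod_cast hiManti hK1k1 hK1μ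
      refine le_antisymm ?_ (hlam_le j1 (l0 - j1) hj1ν hK1μ (by omega))
      exact (add_le_add_right (mul_le_mul_of_nonneg_left hmono (by positivity)) _).trans_eq hV1
    have hmem1' : (j1, l0 - j1) ∈ sSetMK p m iL iM ν μ l l0 0 :=
      (hmem_iff j1 (l0 - j1) l0).mpr ⟨hj1ν, hK1μ, hK1a, hV1'⟩
    have hEq := (hJuniq _ hmem1').trans hJ2
    have : j1 = j2 := congrArg Prod.fst hEq
    omega
  · -- (l0 - μ, μ) is a second element of S^{l0}
    push_neg at hcase
    have hxν : l0 - μ ≤ ν := by omega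
    have hj1x : j1 ≤ l0 - μ := by omega
    have hxsum : (l0 - μ) + μ = l0 := by omega
    have hLmono : (iL (l0 - μ) : ℝ) ≤ iL j1 := by exact_mod_cast hiLanti hj1x hxν
    have hVx : (m:ℝ)*iL (l0 - μ) + (p:ℝ)^(l0 - μ) * iM μ = lamMK p m iL iM ν μ l 0 := by
      refine le_antisymm ?_ (hlam_le (l0 - μ) μ hxν le_rfl (by omega))
      calc (m:ℝ)*iL (l0 - μ) + (p:ℝ)^(l0 - μ) * iM μ
          = (m:ℝ)*iL (l0 - μ) := by rw [hiMμ]; simp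
        _ ≤ (m:ℝ)*iL j1 := mul_le_mul_of_nonneg_left hLmono (by positivity)
        _ ≤ (m:ℝ)*iL j1 + (p:ℝ)^j1 * iM k1 := le_add_of_nonneg_right (by positivity)
        _ = lamMK p m iL iM ν μ l 0 := hV1
    have hmemx : (l0 - μ, μ) ∈ sSetMK p m iL iM ν μ l l0 0 :=
      (hmem_iff (l0 - μ) μ l0).mpr ⟨hxν, le_rfl, hxsum, hVx⟩
    have hEq := (hJuniq _ hmemx).trans hJ2
    have : μ = l0 - j2 := congrArg Prod.snd hEq
    omega
end
end
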